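/- Let F be a finite field with q elements, T a positive integer, and let π1, π2 be F-linear subspaces of F^T with d1 = dim(π1), d2 = dim(π2), and d12 = dim(π1 ∩ π2). Then the number of d2-dimensional subspaces π2' of F^T satisfying π1 + π2' = π1 + π2 equals q^{(d1−d12)(d2−d12)} · |Gr_F(d1, d12)|; in particular, this cardinality depends only on the dimensions d1, d2, d12. -/

import Mathlib

open Finset

/- `grCard F N d` is the number of `d`-dimensional `F`-linear subspaces of `F^N`
(the Gaussian binomial coefficient). -/
noncomputable def grCard (F : Type) [Field F] [Fintype F] (N d : ℕ) : ℕ :=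
  Nat.card {W : Submodule F (Fin N → F) // Module.finrank F ↥W = d}

namespace SameSumAux

open Module LinearMap

variable {F : Type} [Field F]

section Quot

variable {V : Type} [AddCommGroup V] [Module F V] (P U : Submodule F V)

lemma map_isCompl (hUP : U ≤ P) (W : Submodule F V) (hsup : P ⊔ W = ⊤) (hinf : P ⊓ W = U) :
    IsCompl (P.map U.mkQ) (W.map U.mkQ) := by
  constructor
  · rw [disjoint_iff, eq_bot_iff]
    rintro x ⟨⟨p, hp, rfl⟩, ⟨w, hw, hpw⟩⟩
    have hpw' : p - w ∈ U := by
      rw [← Submodule.Quotient.eq]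
      have h : Submodule.Quotient.mk (p := U) p = Submodule.Quotient.mk w := by
        simpa [Submodule.mkQ_apply] using hpw.symm
      exact h
    have hwP : w ∈ P := by
      have := P.sub_mem hp (hUP hpw')
      simpa using this
    have : w ∈ U := hinf ▸ ⟨hwP, hw⟩
    simp only [Submodule.mem_bot, ← hpw, Submodule.mkQ_apply, Submodule.Quotient.mk_eq_zero]
    exact this
  · rw [codisjoint_iff, ← Submodule.map_sup, hsup, Submodule.map_top, Submodule.range_mkQ]

lemma comap_sup_eq_top (hUP : U ≤ P) (q : Submodule F (V ⧸ U)) (hq : IsCompl (P.map U.mkQ) q) :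
    P ⊔ q.comap U.mkQ = ⊤ := by
  have h1 : (P ⊔ q.comap U.mkQ).map U.mkQ = ⊤ := by
    rw [Submodule.map_sup, Submodule.map_comap_eq, Submodule.range_mkQ, top_inf_eq,
      codisjoint_iff.mp hq.2]
  have h2 : U ≤ P ⊔ q.comap U.mkQ := hUP.trans le_sup_left
  have := congrArg (Submodule.comap U.mkQ) h1
  rwa [Submodule.comap_map_eq, Submodule.ker_mkQ, sup_eq_left.mpr h2, Submodule.comap_top] at this

lemma comap_inf_eq (hUP : U ≤ P) (q : Submodule F (V ⧸ U)) (hq : IsCompl (P.map U.mkQ) q) :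
    P ⊓ q.comap U.mkQ = U := by
  apply le_antisymm
  · rintro x ⟨hxP, hxq⟩
    have hx : U.mkQ x ∈ P.map U.mkQ ⊓ q := ⟨⟨x, hxP, rfl⟩, hxq⟩
    rw [disjoint_iff.mp hq.1, Submodule.mem_bot] at hx
    rw [Submodule.mkQ_apply, Submodule.Quotient.mk_eq_zero] at hx
    exact hx
  · refine le_inf hUP (fun x hx => ?_)
    have : U.mkQ x = 0 := by rw [Submodule.mkQ_apply, Submodule.Quotient.mk_eq_zero]; exact hx
    simp [Submodule.mem_comap, this]

noncomputable def fiberEquivCompl (hUP : U ≤ P) :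
    {W : Submodule F V // P ⊔ W = ⊤ ∧ P ⊓ W = U} ≃
      {q : Submodule F (V ⧸ U) // IsCompl (P.map U.mkQ) q} where
  toFun W := ⟨W.1.map U.mkQ, map_isCompl P U hUP W.1 W.2.1 W.2.2⟩
  invFun q := ⟨q.1.comap U.mkQ, comap_sup_eq_top P U hUP q.1 q.2,
    comap_inf_eq P U hUP q.1 q.2⟩
  left_inv W := by
    obtain ⟨W, hsup, hinf⟩ := W
    ext1
    simp only
    have hUW : U ≤ W := by rw [← hinf]; exact inf_le_right
    rw [Submodule.comap_map_eq, Submodule.ker_mkQ, sup_eq_left.mpr hUW]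
  right_inv q := by
    ext1
    simp only
    rw [Submodule.map_comap_eq, Submodule.range_mkQ, top_inf_eq]

end Quot

section Compl

variable (V : Type) [AddCommGroup V] [Module F V]

noncomputable def projEquivHom (p q₀ : Submodule F V) (h : IsCompl p q₀) :
    { f : V →ₗ[F] p // ∀ x : p, f x = x } ≃ (↥q₀ →ₗ[F] ↥p) where
  toFun f := (f : V →ₗ[F] ↥p).comp q₀.subtype
  invFun g := ⟨LinearMap.ofIsCompl h LinearMap.id g, fun x => by
    simp [LinearMap.ofIsCompl_left_apply]⟩
  left_inv f := by
    ext1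
    apply LinearMap.ofIsCompl_eq h (fun u => (f.2 u).symm) (fun u => rfl)
  right_inv g := by
    ext u
    simp [LinearMap.ofIsCompl_right_apply]

noncomputable def complEquivHom (p q₀ : Submodule F V) (h : IsCompl p q₀) :
    { q : Submodule F V // IsCompl p q } ≃ (↥q₀ →ₗ[F] ↥p) :=
  (Submodule.isComplEquivProj p).trans (projEquivHom V p q₀ h)

end Compl

section Card

variable [Fintype F]

lemma natCard_hom (V W : Type) [AddCommGroup V] [Module F V] [FiniteDimensional F V]
    [AddCommGroup W] [Module F W] [FiniteDimensional F W] :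
    Nat.card (V →ₗ[F] W) = Fintype.card F ^ (finrank F V * finrank F W) := by
  have : Finite V := Module.finite_iff_finite.mp ‹_›
  have : Finite W := Module.finite_iff_finite.mp ‹_›
  have e := LinearMap.toMatrix (Module.finBasis F V) (Module.finBasis F W)
  rw [Nat.card_congr e.toEquiv]
  simp [Nat.card_eq_fintype_card, Matrix, Nat.mul_comm]
  ring_nf

lemma natCard_compl {V : Type} [AddCommGroup V] [Module F V] [FiniteDimensional F V]
    (p : Submodule F V) :
    Nat.card { q : Submodule F V // IsCompl p q } =
      Fintype.card F ^ ((finrank F V - finrank F ↥p) * finrank F ↥p) := by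
  obtain ⟨q₀, h⟩ := p.exists_isCompl
  rw [Nat.card_congr (complEquivHom V p q₀ h), natCard_hom]
  congr 2
  have := Submodule.finrank_add_eq_of_isCompl h
  omega

/-- The Grassmannian cardinality is invariant under linear equivalence. -/
lemma natCard_gr_congr {V W : Type} [AddCommGroup V] [Module F V]
    [AddCommGroup W] [Module F W] (e : V ≃ₗ[F] W) (d : ℕ) :
    Nat.card {U : Submodule F V // finrank F ↥U = d} =
      Nat.card {U : Submodule F W // finrank F ↥U = d} := by
  refine Nat.card_congr (Equiv.subtypeEquiv (Submodule.orderIsoMapComap e).toEquiv fun U => ?_)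
  have : finrank F ↥(Submodule.map (e : V →ₗ[F] W) U) = finrank F ↥U :=
    (LinearEquiv.finrank_eq (e.submoduleMap U)).symm
  show finrank F ↥U = d ↔ finrank F ↥(Submodule.map (e : V →ₗ[F] W) U) = d
  rw [this]

end Card

end SameSumAux

namespace SameSumAux

open Module LinearMap

variable {F : Type} [Field F] [Fintype F]

lemma fiber_card {V : Type} [AddCommGroup V] [Module F V] [FiniteDimensional F V]
    (P : Submodule F V) (d1 d2 d12 : ℕ) (hP : finrank F ↥P = d1)
    (h1 : d12 ≤ d1) (h2 : d12 ≤ d2) (hV : finrank F V + d12 = d1 + d2)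
    (U : Submodule F V) (hUP : U ≤ P) (hUr : finrank F ↥U = d12) :
    Nat.card {W : Submodule F V // P ⊔ W = ⊤ ∧ P ⊓ W = U} =
      Fintype.card F ^ ((d1 - d12) * (d2 - d12)) := by
  rw [Nat.card_congr (fiberEquivCompl P U hUP), natCard_compl]
  -- compute finrank of P.map U.mkQ
  set g : ↥P →ₗ[F] V ⧸ U := U.mkQ.comp P.subtype with hg
  have hr : LinearMap.range g = P.map U.mkQ := by
    rw [hg, LinearMap.range_comp, Submodule.range_subtype]
  have hk : LinearMap.ker g = U.comap P.subtype := by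
    rw [hg, LinearMap.ker_comp, Submodule.ker_mkQ]
  have hkr : finrank F ↥(LinearMap.ker g) = d12 := by
    rw [hk]
    exact (LinearEquiv.finrank_eq (Submodule.comapSubtypeEquivOfLe hUP)).trans hUr
  have hrn := LinearMap.finrank_range_add_finrank_ker g
  rw [hkr, hP] at hrn
  have hpr : finrank F ↥(P.map U.mkQ) = d1 - d12 := by rw [← hr]; omega
  have hq := Submodule.finrank_quotient_add_finrank U
  rw [hUr] at hq
  rw [hpr]
  have h3 : finrank F (V ⧸ U) - (d1 - d12) = d2 - d12 := by omega
  rw [h3, Nat.mul_comm]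

lemma abstract_count {V : Type} [AddCommGroup V] [Module F V] [FiniteDimensional F V]
    (P : Submodule F V) (d1 d2 d12 : ℕ) (hP : finrank F ↥P = d1)
    (h1 : d12 ≤ d1) (h2 : d12 ≤ d2) (hV : finrank F V + d12 = d1 + d2) :
    Nat.card {W : Submodule F V // finrank F ↥W = d2 ∧ P ⊔ W = ⊤} =
      Fintype.card F ^ ((d1 - d12) * (d2 - d12)) *
        Nat.card {U : Submodule F ↥P // finrank F ↥U = d12} := by
  have hfinV : Finite V := Module.finite_iff_finite.mp ‹_›
  have hfinS : Finite (Submodule F V) := Finite.of_injective _ SetLike.coe_injective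
  have hfinSP : Finite (Submodule F ↥P) := Finite.of_injective _ SetLike.coe_injective
  set f : {W : Submodule F V // finrank F ↥W = d2 ∧ P ⊔ W = ⊤} →
      {U : Submodule F ↥P // finrank F ↥U = d12} := fun W =>
    ⟨(P ⊓ W.1).comap P.subtype, by
      rw [LinearEquiv.finrank_eq (Submodule.comapSubtypeEquivOfLe (inf_le_left : P ⊓ W.1 ≤ P))]
      have h := Submodule.finrank_sup_add_finrank_inf_eq P W.1
      rw [W.2.2, hP, W.2.1, finrank_top] at h
      omega⟩ with hf
  -- each fiber of f is in bijection with a set of the fixed cardinality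
  have fiber_eq : ∀ U : {U : Submodule F ↥P // finrank F ↥U = d12},
      Nat.card {W // f W = U} = Fintype.card F ^ ((d1 - d12) * (d2 - d12)) := by
    intro U
    set Ub : Submodule F V := U.1.map P.subtype with hUb
    have hUbP : Ub ≤ P := by
      rw [hUb]; rintro x ⟨y, hy, rfl⟩; exact y.2
    have hUbr : finrank F ↥Ub = d12 := by
      rw [hUb, ← LinearEquiv.finrank_eq
        (Submodule.equivMapOfInjective P.subtype P.injective_subtype U.1)]
      exact U.2
    have e : {W // f W = U} ≃ {W : Submodule F V // P ⊔ W = ⊤ ∧ P ⊓ W = Ub} := by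
      refine ⟨fun W => ⟨W.1.1, W.1.2.2, ?_⟩, fun W => ⟨⟨W.1, ?_, W.2.1⟩, ?_⟩, ?_, ?_⟩
      · have h := congrArg (Submodule.map P.subtype) (Subtype.ext_iff.mp W.2)
        rw [Submodule.map_comap_subtype, inf_left_idem] at h
        rw [h]
      · have h := Submodule.finrank_sup_add_finrank_inf_eq P W.1
        rw [W.2.1, W.2.2, hP, finrank_top, hUbr] at h
        omega
      · apply Subtype.ext
        show (P ⊓ W.1).comap P.subtype = U.1
        rw [W.2.2, hUb, Submodule.comap_map_eq_of_injective P.injective_subtype]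
      · intro W; apply Subtype.ext; rfl
      · intro W; apply Subtype.ext; rfl
    rw [Nat.card_congr e]
    exact fiber_card P d1 d2 d12 hP h1 h2 hV Ub hUbP hUbr
  rw [Nat.card_congr (Equiv.sigmaFiberEquiv f).symm]
  letI : Fintype {U : Submodule F ↥P // finrank F ↥U = d12} := Fintype.ofFinite _
  letI : ∀ U : {U : Submodule F ↥P // finrank F ↥U = d12}, Fintype {W // f W = U} :=
    fun U => Fintype.ofFinite _
  rw [Nat.card_eq_fintype_card, Fintype.card_sigma]
  have : ∀ U : {U : Submodule F ↥P // finrank F ↥U = d12},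
      Fintype.card {W // f W = U} = Fintype.card F ^ ((d1 - d12) * (d2 - d12)) := by
    intro U; rw [← Nat.card_eq_fintype_card]; exact fiber_eq U
  rw [Finset.sum_congr rfl (fun U _ => this U), Finset.sum_const, smul_eq_mul,
    Finset.card_univ, ← Nat.card_eq_fintype_card, Nat.mul_comm]

end SameSumAux

set_option maxHeartbeats 1000000 in
set_option synthInstance.maxHeartbeats 400000 in
theorem card_subspaces_with_same_sum (F : Type) [Field F] [Fintype F] (T : ℕ) (hT : 0 < T)
    (π1 π2 : Submodule F (Fin T → F)) (d1 d2 d12 : ℕ)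
    (hd1 : Module.finrank F ↥π1 = d1) (hd2 : Module.finrank F ↥π2 = d2)
    (hd12 : Module.finrank F ↥(π1 ⊓ π2) = d12) :
    Nat.card {π2' : Submodule F (Fin T → F) //
        Module.finrank F ↥π2' = d2 ∧ π1 ⊔ π2' = π1 ⊔ π2} =
      Fintype.card F ^ ((d1 - d12) * (d2 - d12)) * grCard F d1 d12 := by
  classical
  set S := π1 ⊔ π2 with hSdef
  have h1 : d12 ≤ d1 := by rw [← hd1, ← hd12]; exact Submodule.finrank_mono inf_le_left
  have h2 : d12 ≤ d2 := by rw [← hd2, ← hd12]; exact Submodule.finrank_mono inf_le_right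
  have hV : Module.finrank F ↥S + d12 = d1 + d2 := by
    have h := Submodule.finrank_sup_add_finrank_inf_eq π1 π2
    rw [hd1, hd2, hd12] at h
    exact h
  set P := π1.comap S.subtype with hPdef
  have hπ1S : π1 ≤ S := le_sup_left
  have hP : Module.finrank F ↥P = d1 := by
    rw [hPdef, LinearEquiv.finrank_eq (Submodule.comapSubtypeEquivOfLe hπ1S), hd1]
  have hmapP : P.map S.subtype = π1 := by
    rw [hPdef, Submodule.map_comap_subtype, inf_eq_right.mpr hπ1S]
  have key : ∀ W : Submodule F ↥S, (P ⊔ W = ⊤ ↔ π1 ⊔ W.map S.subtype = S) := by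
    intro W
    rw [← (Submodule.map_injective_of_injective S.injective_subtype).eq_iff,
      Submodule.map_sup, hmapP, Submodule.map_top, Submodule.range_subtype]
  have e0 : {W : Submodule F ↥S // Module.finrank F ↥W = d2 ∧ P ⊔ W = ⊤} ≃
      {π2' : Submodule F (Fin T → F) //
        Module.finrank F ↥π2' = d2 ∧ π1 ⊔ π2' = π1 ⊔ π2} := by
    refine ⟨fun W => ⟨W.1.map S.subtype, ?_, ?_⟩, fun q => ?_, ?_, ?_⟩
    · exact (LinearEquiv.finrank_eq
        (Submodule.equivMapOfInjective S.subtype S.injective_subtype W.1)).symm.trans W.2.1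
    · exact (key W.1).mp W.2.2
    · have hqS : q.1 ≤ S := le_sup_right.trans (le_of_eq q.2.2)
      refine ⟨q.1.comap S.subtype, ?_, ?_⟩
      · rw [LinearEquiv.finrank_eq (Submodule.comapSubtypeEquivOfLe hqS)]
        exact q.2.1
      · rw [key, Submodule.map_comap_subtype, inf_eq_right.mpr hqS]
        exact q.2.2
    · intro W
      apply Subtype.ext
      simp only
      rw [Submodule.comap_map_eq_of_injective S.injective_subtype]
    · intro q
      have hqS : q.1 ≤ S := le_sup_right.trans (le_of_eq q.2.2)
      apply Subtype.ext
      simp only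
      rw [Submodule.map_comap_subtype, inf_eq_right.mpr hqS]
  rw [← Nat.card_congr e0, SameSumAux.abstract_count P d1 d2 d12 hP h1 h2 hV]
  congr 1
  haveI : Module.Free F ↥P := Module.Free.of_divisionRing F ↥P
  have e : ↥P ≃ₗ[F] (Fin d1 → F) :=
    ((Module.finBasis F ↥P).reindex (finCongr hP)).equivFun
  exact SameSumAux.natCard_gr_congr (V := ↥P) (W := Fin d1 → F) e d12
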